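/- Let H be a separable Hilbert space and {φ_n}_{n≥0} a sequence of unit vectors in H. Define ξ_0 = ⟨ξ, φ_0⟩φ_0 and ξ_n = ξ_{n−1} + ⟨ξ − ξ_{n−1}, φ_n⟩φ_n for n ≥ 1 (the Kaczmarz algorithm), and define γ_0 = φ_0 and γ_n = φ_n − Σ_{k=0}^{n−1} ⟨φ_n, φ_k⟩ γ_k. Then for every ξ ∈ H and every n ≥ 0, ξ_n = Σ_{k=0}^{n} ⟨ξ, γ_k⟩ φ_k. -/
import Mathlib


open scoped ComplexConjugate

local notation "⟪" x ", " y "⟫" => @inner ℂ _ _ x y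

/-- Kaczmarz iterates `ξ_n` satisfy `ξ_n = Σ_{k=0}^n ⟨ξ, γ_k⟩ φ_k`,
where the paper's inner product `⟨a,b⟩` (linear in the first argument) corresponds
to Mathlib's `⟪b, a⟫`. -/
theorem kaczmarz_partial_sums
    (H : Type*) [NormedAddCommGroup H] [InnerProductSpace ℂ H]
    [CompleteSpace H] [TopologicalSpace.SeparableSpace H]
    (φ : ℕ → H) (hφ : ∀ n, ‖φ n‖ = 1)
    (x : H → ℕ → H)
    (hx0 : ∀ ξ : H, x ξ 0 = ⟪φ 0, ξ⟫ • φ 0)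
    (hxs : ∀ ξ : H, ∀ n : ℕ,
      x ξ (n + 1) = x ξ n + ⟪φ (n + 1), ξ - x ξ n⟫ • φ (n + 1))
    (γ : ℕ → H)
    (hγ0 : γ 0 = φ 0)
    (hγs : ∀ n : ℕ,
      γ (n + 1) = φ (n + 1) - ∑ k ∈ Finset.range (n + 1), ⟪φ k, φ (n + 1)⟫ • γ k) :
    ∀ (ξ : H) (n : ℕ), x ξ n = ∑ k ∈ Finset.range (n + 1), ⟪γ k, ξ⟫ • φ k := by
  intro ξ n
  induction n with
  | zero => simp [hx0, hγ0]
  | succ n ih =>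
    rw [hxs, ih, Finset.sum_range_succ _ (n + 1)]
    congr 1
    rw [hγs, inner_sub_left, sum_inner, inner_sub_right, inner_sum]
    congr 1
    congr 1
    apply Finset.sum_congr rfl
    intro k hk
    rw [inner_smul_left, inner_smul_right, inner_conj_symm]
    ring
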